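/- Let (E,H) and (E',H') be matrix pencils (pairs of matrices over a field K of sizes (m+n)×(p+q) and m×p respectively). Then there exist matrices E12, E21, E22, H12, H21, H22 such that (E,H) is strictly equivalent to the block pencil ([[E',E12],[E21,E22]], [[H',H12],[H21,H22]]) if and only if the Kronecker representation (E',H') is a subfactor of the Kronecker representation (E,H), i.e., a quotient representation of a subrepresentation of (E,H). -/

import Mathlib

open Matrix

/-- A homomorphism of Kronecker representations `(E', H') → (E, H)` is a pair of
matrices `(ψ, φ)` with `E * φ = ψ * E'` and `H * φ = ψ * H'`. A subrepresentation
is witnessed by an injective such pair. -/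
def IsSubrep {K : Type*} [Field K] {a b c d : Type*} [Fintype a] [Fintype b] [Fintype c]
    [Fintype d] (E H : Matrix a b K) (E' H' : Matrix c d K) : Prop :=
  ∃ (ψ : Matrix a c K) (φ : Matrix b d K),
    Function.Injective ψ.mulVecLin ∧ Function.Injective φ.mulVecLin ∧
    E * φ = ψ * E' ∧ H * φ = ψ * H'

/-- `(E', H')` is a quotient (factor) representation of `(E, H)`:
there is a surjective pair `(ψ, φ)` with `E' * φ = ψ * E` and `H' * φ = ψ * H`. -/
def IsQuot {K : Type*} [Field K] {a b c d : Type*} [Fintype a] [Fintype b] [Fintype c]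
    [Fintype d] (E H : Matrix a b K) (E' H' : Matrix c d K) : Prop :=
  ∃ (ψ : Matrix c a K) (φ : Matrix d b K),
    Function.Surjective ψ.mulVecLin ∧ Function.Surjective φ.mulVecLin ∧
    E' * φ = ψ * E ∧ H' * φ = ψ * H

/-- `(E', H')` is a subfactor of `(E, H)`: a quotient of a subrepresentation. -/
def IsSubfactor {K : Type*} [Field K] {a b c d : Type*} [Fintype a] [Fintype b] [Fintype c]
    [Fintype d] (E H : Matrix a b K) (E' H' : Matrix c d K) : Prop :=
  ∃ (k l : ℕ) (E₁ H₁ : Matrix (Fin k) (Fin l) K),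
    IsSubrep E H E₁ H₁ ∧ IsQuot E₁ H₁ E' H'



section Aux

variable {K : Type*} [Field K]

private lemma matrix_eq_of_mulVecLin {a b : Type*} [Fintype b] [DecidableEq b]
    {M N : Matrix a b K} (h : M.mulVecLin = N.mulVecLin) : M = N := by
  have : Matrix.toLin' M = Matrix.toLin' N := by
    rw [Matrix.toLin'_apply', Matrix.toLin'_apply', h]
  exact Matrix.toLin'.injective this

private lemma mulVecLin_toMatrix'' {a b : Type*} [Fintype a] [Fintype b] [DecidableEq b]
    (f : (b → K) →ₗ[K] (a → K)) : (LinearMap.toMatrix' f).mulVecLin = f := by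
  rw [← Matrix.toLin'_apply', Matrix.toLin'_toMatrix']

private lemma isUnit_of_mulVecLin_bijective {o : Type*} [Fintype o] [DecidableEq o]
    {M : Matrix o o K} (h : Function.Bijective M.mulVecLin) : IsUnit M := by
  let e := LinearEquiv.ofBijective M.mulVecLin h
  have h1 : M * LinearMap.toMatrix' (e.symm : (o → K) →ₗ[K] (o → K)) = 1 := by
    apply matrix_eq_of_mulVecLin
    rw [Matrix.mulVecLin_mul, mulVecLin_toMatrix'', Matrix.mulVecLin_one]
    apply LinearMap.ext; intro v
    exact e.apply_symm_apply v
  exact ⟨⟨M, _, h1, mul_eq_one_comm.mp h1⟩, rfl⟩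

private lemma inj_of_left_inv {a b : Type*} [Fintype a] [Fintype b] [DecidableEq b]
    {M : Matrix a b K} {A : Matrix b a K} (h : A * M = 1) :
    Function.Injective M.mulVecLin := by
  intro x y hxy
  have h2 : (A * M).mulVecLin x = (A * M).mulVecLin y := by
    rw [Matrix.mulVecLin_mul]
    simp only [LinearMap.comp_apply]
    rw [hxy]
  rw [h, Matrix.mulVecLin_one] at h2
  simpa using h2

private lemma surj_of_right_inv {a b : Type*} [Fintype a] [Fintype b] [DecidableEq a]
    {M : Matrix a b K} {B : Matrix b a K} (h : M * B = 1) :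
    Function.Surjective M.mulVecLin := by
  intro y
  refine ⟨B.mulVecLin y, ?_⟩
  have h2 := congrArg Matrix.mulVecLin h
  rw [Matrix.mulVecLin_mul, Matrix.mulVecLin_one] at h2
  simpa using LinearMap.ext_iff.1 h2 y

end Aux


section Aux2

variable {K : Type*} [Field K]

variable (K) in
private def inlMap (c d : Type*) : (c → K) →ₗ[K] (c ⊕ d → K) where
  toFun v := Sum.elim v 0
  map_add' u v := by funext i; cases i <;> simp
  map_smul' r v := by funext i; cases i <;> simp

variable (K) in
private def fstMap (c d : Type*) : (c ⊕ d → K) →ₗ[K] (c → K) where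
  toFun w := w ∘ Sum.inl
  map_add' _ _ := rfl
  map_smul' _ _ := rfl

private lemma inlMap_injective {c d : Type*} : Function.Injective (inlMap K c d) := by
  intro u v h
  funext i
  exact congrFun h (Sum.inl i)

private lemma mulVecLin_toBlocks₁₁ {a b c d : Type*} [Fintype a] [Fintype b] [Fintype c]
    [Fintype d] (M : Matrix (a ⊕ b) (c ⊕ d) K) :
    (M.toBlocks₁₁).mulVecLin = (fstMap K a b) ∘ₗ M.mulVecLin ∘ₗ (inlMap K c d) := by
  apply LinearMap.ext; intro v
  funext i
  simp [fstMap, inlMap, Matrix.mulVecLin_apply, Matrix.mulVec, dotProduct,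
    Fintype.sum_sum_type, Matrix.toBlocks₁₁]

private lemma mul_one_submatrix_inl {a c d : Type*} [Fintype a] [Fintype c] [Fintype d]
    [DecidableEq c] [DecidableEq d] (M : Matrix a (c ⊕ d) K) :
    M * ((1 : Matrix (c ⊕ d) (c ⊕ d) K).submatrix id Sum.inl) = M.submatrix id Sum.inl := by
  ext i j
  simp [Matrix.mul_apply, Matrix.one_apply]

private lemma one_submatrix_inl_mul {a c d : Type*} [Fintype a] [Fintype c] [Fintype d]
    [DecidableEq c] [DecidableEq d] (M : Matrix (c ⊕ d) a K) :
    ((1 : Matrix (c ⊕ d) (c ⊕ d) K).submatrix Sum.inl id) * M = M.submatrix Sum.inl id := by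
  ext i j
  simp [Matrix.mul_apply, Matrix.one_apply]

private lemma proj_mul_incl {c d : Type*} [Fintype c] [Fintype d] [DecidableEq c]
    [DecidableEq d] :
    ((1 : Matrix (c ⊕ d) (c ⊕ d) K).submatrix Sum.inl id) *
      ((1 : Matrix (c ⊕ d) (c ⊕ d) K).submatrix id Sum.inl) = (1 : Matrix c c K) := by
  rw [one_submatrix_inl_mul]
  ext i j
  simp [Matrix.one_apply, Sum.inl.injEq]

private lemma one_submatrix_inl_inl {c d : Type*} [Fintype c] [Fintype d] [DecidableEq c]
    [DecidableEq d] :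
    ((1 : Matrix (c ⊕ d) (c ⊕ d) K).submatrix Sum.inl Sum.inl) = (1 : Matrix c c K) := by
  ext i j
  simp [Matrix.one_apply, Sum.inl.injEq]

private lemma exists_linearEquiv_comp_eq {α W : Type*} [AddCommGroup α] [Module K α]
    [AddCommGroup W] [Module K W] [FiniteDimensional K W]
    (f g : α →ₗ[K] W) (hf : Function.Injective f) (hg : Function.Injective g) :
    ∃ e : W ≃ₗ[K] W, ∀ x, e (f x) = g x := by
  obtain ⟨F', hF'⟩ := Submodule.exists_isCompl (LinearMap.range f)
  obtain ⟨G', hG'⟩ := Submodule.exists_isCompl (LinearMap.range g)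
  have hrr : Module.finrank K (LinearMap.range f) = Module.finrank K (LinearMap.range g) :=
    ((LinearEquiv.ofInjective f hf).symm.trans (LinearEquiv.ofInjective g hg)).finrank_eq
  have h1 := Submodule.finrank_add_eq_of_isCompl hF'
  have h2 := Submodule.finrank_add_eq_of_isCompl hG'
  have hcc : Module.finrank K F' = Module.finrank K G' := by omega
  let eR : (LinearMap.range f) ≃ₗ[K] (LinearMap.range g) :=
    (LinearEquiv.ofInjective f hf).symm.trans (LinearEquiv.ofInjective g hg)
  let eC : F' ≃ₗ[K] G' := LinearEquiv.ofFinrankEq _ _ hcc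
  refine ⟨((Submodule.prodEquivOfIsCompl _ _ hF').symm.trans ((eR.prodCongr eC).trans
    (Submodule.prodEquivOfIsCompl _ _ hG'))), fun x => ?_⟩
  have hx : (Submodule.prodEquivOfIsCompl (LinearMap.range f) F' hF').symm (f x)
      = ((⟨f x, LinearMap.mem_range_self f x⟩ : LinearMap.range f), 0) :=
    Submodule.prodEquivOfIsCompl_symm_apply_left _ _ hF'
      (⟨f x, LinearMap.mem_range_self f x⟩ : LinearMap.range f)
  have hsy : (LinearEquiv.ofInjective f hf).symm
      (⟨f x, LinearMap.mem_range_self f x⟩ : LinearMap.range f) = x := by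
    have h5 : LinearEquiv.ofInjective f hf x
        = (⟨f x, LinearMap.mem_range_self f x⟩ : LinearMap.range f) :=
      Subtype.ext (LinearEquiv.ofInjective_apply f x)
    rw [← h5, LinearEquiv.symm_apply_apply]
  simp only [LinearEquiv.trans_apply, hx, LinearEquiv.prodCongr_apply, map_zero,
    Submodule.coe_prodEquivOfIsCompl', eR, hsy]
  simp [LinearEquiv.ofInjective_apply]

private lemma exists_injective_into_pi {V : Type*} [AddCommGroup V] [Module K V]
    [FiniteDimensional K V] {n : ℕ} (h : Module.finrank K V ≤ n) :
    ∃ u : V →ₗ[K] (Fin n → K), Function.Injective u := by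
  refine ⟨(Function.ExtendByZero.linearMap K (Fin.castLE h)).comp
    ((Module.finBasis K V).equivFun : V →ₗ[K] _), ?_⟩
  have h1 : Function.Injective (Function.ExtendByZero.linearMap K (Fin.castLE h)) := by
    intro u v huv
    funext i
    have h2 := congrFun huv (Fin.castLE h i)
    simpa [Function.ExtendByZero.linearMap_apply,
      (Fin.castLE_injective h).extend_apply] using h2
  rw [LinearMap.coe_comp]
  exact h1.comp (LinearEquiv.injective _)

end Aux2

private lemma forward_dir {K : Type*} [Field K] {m n p q : ℕ}
    (E H : Matrix (Fin m ⊕ Fin n) (Fin p ⊕ Fin q) K) (E' H' : Matrix (Fin m) (Fin p) K)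
    (E₁₂ : Matrix (Fin m) (Fin q) K) (E₂₁ : Matrix (Fin n) (Fin p) K)
    (E₂₂ : Matrix (Fin n) (Fin q) K) (H₁₂ : Matrix (Fin m) (Fin q) K)
    (H₂₁ : Matrix (Fin n) (Fin p) K) (H₂₂ : Matrix (Fin n) (Fin q) K)
    (P : Matrix (Fin m ⊕ Fin n) (Fin m ⊕ Fin n) K)
    (Q : Matrix (Fin p ⊕ Fin q) (Fin p ⊕ Fin q) K)
    (hP : IsUnit P) (hQ : IsUnit Q)
    (hE : E = P * Matrix.fromBlocks E' E₁₂ E₂₁ E₂₂ * Q)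
    (hH : H = P * Matrix.fromBlocks H' H₁₂ H₂₁ H₂₂ * Q) :
    ∃ (E₁ H₁ : Matrix (Fin (m + n)) (Fin p) K),
      (∃ (ψ : Matrix (Fin m ⊕ Fin n) (Fin (m + n)) K) (φ : Matrix (Fin p ⊕ Fin q) (Fin p) K),
        Function.Injective ψ.mulVecLin ∧ Function.Injective φ.mulVecLin ∧
        E * φ = ψ * E₁ ∧ H * φ = ψ * H₁) ∧
      (∃ (ψ' : Matrix (Fin m) (Fin (m + n)) K) (φ' : Matrix (Fin p) (Fin p) K),
        Function.Surjective ψ'.mulVecLin ∧ Function.Surjective φ'.mulVecLin ∧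
        E' * φ' = ψ' * E₁ ∧ H' * φ' = ψ' * H₁) := by
  have e : Fin m ⊕ Fin n ≃ Fin (m + n) := finSumFinEquiv
  refine ⟨((Matrix.fromBlocks E' E₁₂ E₂₁ E₂₂ *
      ((1 : Matrix (Fin p ⊕ Fin q) (Fin p ⊕ Fin q) K).submatrix id Sum.inl)).submatrix
      ⇑e.symm id),
    ((Matrix.fromBlocks H' H₁₂ H₂₁ H₂₂ *
      ((1 : Matrix (Fin p ⊕ Fin q) (Fin p ⊕ Fin q) K).submatrix id Sum.inl)).submatrix
      ⇑e.symm id),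
    ⟨P.submatrix id ⇑e.symm,
     (↑hQ.unit⁻¹ : Matrix (Fin p ⊕ Fin q) (Fin p ⊕ Fin q) K) *
       ((1 : Matrix (Fin p ⊕ Fin q) (Fin p ⊕ Fin q) K).submatrix id Sum.inl),
     ?_, ?_, ?_, ?_⟩,
    ⟨(1 : Matrix (Fin m ⊕ Fin n) (Fin m ⊕ Fin n) K).submatrix Sum.inl ⇑e.symm,
     (1 : Matrix (Fin p) (Fin p) K), ?_, ?_, ?_, ?_⟩⟩
  · apply inj_of_left_inv
      (A := (↑hP.unit⁻¹ : Matrix (Fin m ⊕ Fin n) (Fin m ⊕ Fin n) K).submatrix ⇑e.symm id)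
    rw [← Matrix.submatrix_mul _ _ _ id _ Function.bijective_id, hP.val_inv_mul,
      Matrix.submatrix_one_equiv]
  · apply inj_of_left_inv
      (A := ((1 : Matrix (Fin p ⊕ Fin q) (Fin p ⊕ Fin q) K).submatrix Sum.inl id) * Q)
    rw [Matrix.mul_assoc, ← Matrix.mul_assoc Q, hQ.mul_val_inv, Matrix.one_mul, proj_mul_incl]
  · rw [Matrix.submatrix_mul_equiv P _ id e.symm id, Matrix.submatrix_id_id, hE,
      Matrix.mul_assoc (P * Matrix.fromBlocks E' E₁₂ E₂₁ E₂₂) Q,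
      ← Matrix.mul_assoc Q, hQ.mul_val_inv, Matrix.one_mul, Matrix.mul_assoc]
  · rw [Matrix.submatrix_mul_equiv P _ id e.symm id, Matrix.submatrix_id_id, hH,
      Matrix.mul_assoc (P * Matrix.fromBlocks H' H₁₂ H₂₁ H₂₂) Q,
      ← Matrix.mul_assoc Q, hQ.mul_val_inv, Matrix.one_mul, Matrix.mul_assoc]
  · apply surj_of_right_inv
      (B := (1 : Matrix (Fin m ⊕ Fin n) (Fin m ⊕ Fin n) K).submatrix ⇑e.symm Sum.inl)
    rw [Matrix.submatrix_mul_equiv, Matrix.one_mul, one_submatrix_inl_inl]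
  · exact surj_of_right_inv (Matrix.one_mul (1 : Matrix (Fin p) (Fin p) K))
  · rw [Matrix.mul_one, Matrix.submatrix_mul_equiv, Matrix.one_mul, mul_one_submatrix_inl,
      Matrix.submatrix_submatrix]
    ext i j
    simp
  · rw [Matrix.mul_one, Matrix.submatrix_mul_equiv, Matrix.one_mul, mul_one_submatrix_inl,
      Matrix.submatrix_submatrix]
    ext i j
    simp


set_option maxHeartbeats 1000000 in
private lemma reverse_dir {K : Type*} [Field K] {m n p q k l : ℕ}
    (E H : Matrix (Fin m ⊕ Fin n) (Fin p ⊕ Fin q) K) (E' H' : Matrix (Fin m) (Fin p) K)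
    (E₁ H₁ : Matrix (Fin k) (Fin l) K)
    (ψm : Matrix (Fin m ⊕ Fin n) (Fin k) K) (φm : Matrix (Fin p ⊕ Fin q) (Fin l) K)
    (hψinj : Function.Injective ψm.mulVecLin) (hφinj : Function.Injective φm.mulVecLin)
    (hE1 : E * φm = ψm * E₁) (hH1 : H * φm = ψm * H₁)
    (ψ'm : Matrix (Fin m) (Fin k) K) (φ'm : Matrix (Fin p) (Fin l) K)
    (hψ'surj : Function.Surjective ψ'm.mulVecLin) (hφ'surj : Function.Surjective φ'm.mulVecLin)
    (hE2 : E' * φ'm = ψ'm * E₁) (hH2 : H' * φ'm = ψ'm * H₁) :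
    ∃ (E₁₂ : Matrix (Fin m) (Fin q) K) (E₂₁ : Matrix (Fin n) (Fin p) K)
       (E₂₂ : Matrix (Fin n) (Fin q) K) (H₁₂ : Matrix (Fin m) (Fin q) K)
       (H₂₁ : Matrix (Fin n) (Fin p) K) (H₂₂ : Matrix (Fin n) (Fin q) K)
       (P : Matrix (Fin m ⊕ Fin n) (Fin m ⊕ Fin n) K)
       (Q : Matrix (Fin p ⊕ Fin q) (Fin p ⊕ Fin q) K),
        IsUnit P ∧ IsUnit Q ∧
        E = P * Matrix.fromBlocks E' E₁₂ E₂₁ E₂₂ * Q ∧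
        H = P * Matrix.fromBlocks H' H₁₂ H₂₁ H₂₂ * Q := by
  -- a section of φ'
  obtain ⟨s, hs⟩ := φ'm.mulVecLin.exists_rightInverse_of_surjective
    (LinearMap.range_eq_top.2 hφ'surj)
  have hs' : ∀ x, φ'm.mulVecLin (s x) = x := fun x => by
    have := LinearMap.ext_iff.1 hs x
    simpa using this
  have hsinj : Function.Injective s := fun x y hxy => by rw [← hs' x, ← hs' y, hxy]
  -- the automorphism U of K^(p+q)
  obtain ⟨U, hU⟩ := exists_linearEquiv_comp_eq (inlMap K (Fin p) (Fin q))
    (φm.mulVecLin ∘ₗ s) inlMap_injective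
    (by rw [LinearMap.coe_comp]; exact hφinj.comp hsinj)
  -- kernel of ψ' has small dimension
  have hkmn : Module.finrank K (LinearMap.ker ψ'm.mulVecLin) ≤ n := by
    have h1 := LinearMap.finrank_range_add_finrank_ker ψ'm.mulVecLin
    have h2 : LinearMap.range ψ'm.mulVecLin = ⊤ := LinearMap.range_eq_top.2 hψ'surj
    rw [h2] at h1
    have h3 := LinearMap.finrank_le_finrank_of_injective hψinj
    simp only [finrank_top, Module.finrank_pi, Fintype.card_fin, Fintype.card_sum] at h1 h3
    omega
  obtain ⟨u0, hu0⟩ := exists_injective_into_pi hkmn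
  obtain ⟨C, hC⟩ := Submodule.exists_isCompl (LinearMap.ker ψ'm.mulVecLin)
  set prj := Submodule.linearProjOfIsCompl _ C hC with hprj
  -- the injective map j with fst ∘ j = ψ'
  set j : (Fin k → K) →ₗ[K] ((Fin m ⊕ Fin n) → K) :=
    { toFun := fun x => Sum.elim (ψ'm.mulVecLin x) (u0 (prj x))
      map_add' := fun x y => by funext i; cases i <;> simp [Matrix.mulVec_add]
      map_smul' := fun r x => by funext i; cases i <;> simp [Matrix.mulVec_smul] } with hj
  have hjinj : Function.Injective j := by
    have hz : ∀ x, j x = 0 → x = 0 := by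
      intro x hx
      have h1 : ψ'm.mulVecLin x = 0 := funext fun i => congrFun hx (Sum.inl i)
      have hxκ : x ∈ LinearMap.ker ψ'm.mulVecLin := LinearMap.mem_ker.mpr h1
      have h2 : u0 (prj x) = 0 := funext fun i => congrFun hx (Sum.inr i)
      have h3 : prj x = ⟨x, hxκ⟩ := Submodule.linearProjOfIsCompl_apply_left hC ⟨x, hxκ⟩
      have h4 : (⟨x, hxκ⟩ : LinearMap.ker ψ'm.mulVecLin) = 0 :=
        hu0 (show u0 ⟨x, hxκ⟩ = u0 0 by rw [map_zero, ← h3]; exact h2)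
      simpa using congrArg Subtype.val h4
    intro x y hxy
    have := hz (x - y) (by rw [map_sub, hxy, sub_self])
    exact sub_eq_zero.mp this
  have hfstj : ∀ x, fstMap K (Fin m) (Fin n) (j x) = ψ'm.mulVecLin x := fun _ => rfl
  -- the automorphism V of K^(m+n)
  obtain ⟨V, hV⟩ := exists_linearEquiv_comp_eq ψm.mulVecLin j hψinj hjinj
  -- assemble
  set FE := LinearMap.toMatrix'
    (V.toLinearMap ∘ₗ E.mulVecLin ∘ₗ
      U.toLinearMap) with hFEdef
  set FH := LinearMap.toMatrix'
    (V.toLinearMap ∘ₗ H.mulVecLin ∘ₗ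
      U.toLinearMap) with hFHdef
  set P := LinearMap.toMatrix' V.symm.toLinearMap with hPdef
  set Q := LinearMap.toMatrix' U.symm.toLinearMap with hQdef
  have keyE : ∀ (X : Matrix (Fin m ⊕ Fin n) (Fin p ⊕ Fin q) K)
      (X' : Matrix (Fin m) (Fin p) K) (X₁ : Matrix (Fin k) (Fin l) K),
      X * φm = ψm * X₁ → X' * φ'm = ψ'm * X₁ →
      (LinearMap.toMatrix'
        (V.toLinearMap ∘ₗ X.mulVecLin ∘ₗ
          U.toLinearMap)).toBlocks₁₁ = X' := by
    intro X X' X₁ hX1 hX2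
    apply matrix_eq_of_mulVecLin
    rw [mulVecLin_toBlocks₁₁, mulVecLin_toMatrix'']
    apply LinearMap.ext; intro v
    simp only [LinearMap.comp_apply, LinearEquiv.coe_coe, LinearEquiv.coe_toLinearMap]
    rw [hU v]
    simp only [LinearMap.comp_apply]
    have hXφ : X.mulVecLin (φm.mulVecLin (s v)) = ψm.mulVecLin (X₁.mulVecLin (s v)) := by
      have h := congrArg Matrix.mulVecLin hX1
      rw [Matrix.mulVecLin_mul, Matrix.mulVecLin_mul] at h
      simpa using LinearMap.ext_iff.1 h (s v)
    rw [hXφ, hV (X₁.mulVecLin (s v))]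
    have hq := congrArg Matrix.mulVecLin hX2
    rw [Matrix.mulVecLin_mul, Matrix.mulVecLin_mul] at hq
    have hq2 := LinearMap.ext_iff.1 hq (s v)
    simp only [LinearMap.comp_apply] at hq2
    exact (hfstj _).trans (by rw [← hq2, hs' v])
  have hblockE : FE.toBlocks₁₁ = E' := keyE E E' E₁ hE1 hE2
  have hblockH : FH.toBlocks₁₁ = H' := keyE H H' H₁ hH1 hH2
  have hPu : IsUnit P := by
    apply isUnit_of_mulVecLin_bijective
    rw [hPdef, mulVecLin_toMatrix'']
    exact V.symm.bijective
  have hQu : IsUnit Q := by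
    apply isUnit_of_mulVecLin_bijective
    rw [hQdef, mulVecLin_toMatrix'']
    exact U.symm.bijective
  have hEeq : ∀ (X : Matrix (Fin m ⊕ Fin n) (Fin p ⊕ Fin q) K),
      X = P * LinearMap.toMatrix'
        (V.toLinearMap ∘ₗ X.mulVecLin ∘ₗ
          U.toLinearMap) * Q := by
    intro X
    apply matrix_eq_of_mulVecLin
    rw [Matrix.mulVecLin_mul, Matrix.mulVecLin_mul, hPdef, hQdef, mulVecLin_toMatrix'',
      mulVecLin_toMatrix'', mulVecLin_toMatrix'']
    apply LinearMap.ext; intro v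
    simp
  refine ⟨FE.toBlocks₁₂, FE.toBlocks₂₁, FE.toBlocks₂₂, FH.toBlocks₁₂, FH.toBlocks₂₁,
    FH.toBlocks₂₂, P, Q, hPu, hQu, ?_, ?_⟩
  · rw [← hblockE, Matrix.fromBlocks_toBlocks]
    exact hEeq E
  · rw [← hblockH, Matrix.fromBlocks_toBlocks]
    exact hEeq H


/-- `(E,H)` is strictly equivalent to a block pencil with top-left block
`(E',H')` iff `(E',H')` is a subfactor of `(E,H)`. -/
theorem strict_equiv_block_iff_subfactor {K : Type*} [Field K] {m n p q : ℕ}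
    (E H : Matrix (Fin m ⊕ Fin n) (Fin p ⊕ Fin q) K) (E' H' : Matrix (Fin m) (Fin p) K) :
    (∃ (E₁₂ : Matrix (Fin m) (Fin q) K) (E₂₁ : Matrix (Fin n) (Fin p) K)
       (E₂₂ : Matrix (Fin n) (Fin q) K) (H₁₂ : Matrix (Fin m) (Fin q) K)
       (H₂₁ : Matrix (Fin n) (Fin p) K) (H₂₂ : Matrix (Fin n) (Fin q) K)
       (P : Matrix (Fin m ⊕ Fin n) (Fin m ⊕ Fin n) K)
       (Q : Matrix (Fin p ⊕ Fin q) (Fin p ⊕ Fin q) K),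
        IsUnit P ∧ IsUnit Q ∧
        E = P * Matrix.fromBlocks E' E₁₂ E₂₁ E₂₂ * Q ∧
        H = P * Matrix.fromBlocks H' H₁₂ H₂₁ H₂₂ * Q) ↔
    IsSubfactor E H E' H' := by
  constructor
  · rintro ⟨E₁₂, E₂₁, E₂₂, H₁₂, H₂₁, H₂₂, P, Q, hP, hQ, hE, hH⟩
    obtain ⟨E₁, H₁, hsub, hquot⟩ :=
      forward_dir E H E' H' E₁₂ E₂₁ E₂₂ H₁₂ H₂₁ H₂₂ P Q hP hQ hE hH
    exact ⟨m + n, p, E₁, H₁, hsub, hquot⟩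
  · rintro ⟨k, l, E₁, H₁, ⟨ψm, φm, hψinj, hφinj, hE1, hH1⟩,
      ⟨ψ'm, φ'm, hψ'surj, hφ'surj, hE2, hH2⟩⟩
    exact reverse_dir E H E' H' E₁ H₁ ψm φm hψinj hφinj hE1 hH1 ψ'm φ'm hψ'surj hφ'surj hE2 hH2
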